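/- (Ornstein–Weiss lemma) Let G be an amenable group and let h be a real-valued function on the nonempty finite subsets of G that is subadditive and right-invariant. Then there exists a real number λ ≥ 0, depending only on h, such that for every left Følner net (F_j)_{j∈J} of G, the net of real numbers (h(F_j)/|F_j|)_{j∈J} converges to λ. -/

import Mathlib

open scoped Pointwise
open Filter

set_option linter.unusedSectionVars false
set_option maxHeartbeats 1600000
namespace OWproof
variable {G : Type*} [Group G] [DecidableEq G]

def rt (A : Finset G) (g : G) : Finset G := A.image (· * g)
def unionL : List (Finset G) → Finset G
  | [] => ∅
  | p :: L => p ∪ unionL L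

lemma unionL_append : ∀ P Q : List (Finset G), unionL (P ++ Q) = unionL P ∪ unionL Q
  | [], Q => by simp [unionL]
  | p :: P, Q => by simp [unionL, unionL_append P Q, Finset.union_assoc]

lemma card_sdiff_inv_smul (a : G) (s : Finset G) : (s \ a⁻¹ • s).card = (a • s \ s).card := by
  have : a • (s \ a⁻¹ • s) = a • s \ s := by
    rw [Finset.smul_finset_sdiff, smul_inv_smul]
  rw [← Finset.card_smul_finset a (s \ a⁻¹ • s), this]

lemma card_inv_smul_sdiff (a : G) (s : Finset G) : (a⁻¹ • s \ s).card = (a • s \ s).card := by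
  have h1 : (s \ a • s).card = (a⁻¹ • s \ s).card := by
    have := card_sdiff_inv_smul a⁻¹ s
    rwa [inv_inv] at this
  have h2 : (s \ a • s).card = (a • s \ s).card := by
    have i1 := Finset.card_inter_add_card_sdiff s (a • s)
    have i2 := Finset.card_inter_add_card_sdiff (a • s) s
    have i3 : (a • s).card = s.card := Finset.card_smul_finset a s
    rw [Finset.inter_comm] at i2
    omega
  omega

lemma smul_rt_comm (a : G) (B : Finset G) (g : G) : a • (rt B g) = rt (a • B) g := by
  unfold rt
  ext x
  simp only [Finset.mem_smul_finset, Finset.mem_image, smul_eq_mul]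
  constructor
  · rintro ⟨y, ⟨b, hb, rfl⟩, rfl⟩
    exact ⟨a * b, ⟨b, hb, rfl⟩, by group⟩
  · rintro ⟨y, ⟨b, hb, rfl⟩, rfl⟩
    exact ⟨b * g, ⟨b, hb, rfl⟩, by group⟩

lemma sum_singletons (h : Finset G → ℝ) : ∀ l : List G,
    ((l.map (fun x => ({x} : Finset G))).map h).sum = (l.map (fun x => h {x})).sum
  | [] => by simp
  | x :: l => by
    simp only [List.map_cons, List.sum_cons, sum_singletons h l]

lemma unionL_singletons : ∀ l : List G, unionL (l.map (fun x => ({x} : Finset G))) = l.toFinset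
  | [] => by simp [unionL]
  | x :: l => by
    simp [unionL, unionL_singletons l]


lemma mem_rt {A : Finset G} {g x : G} : x ∈ rt A g ↔ ∃ a ∈ A, a * g = x := Finset.mem_image

lemma card_rt (A : Finset G) (g : G) : (rt A g).card = A.card :=
  Finset.card_image_of_injective _ (mul_left_injective g)

lemma card_sdiff_smul (a : G) (s : Finset G) : (s \ a • s).card = (a⁻¹ • s \ s).card := by
  have := card_sdiff_inv_smul a⁻¹ s
  rwa [inv_inv] at this

lemma mem_unionL {x : G} : ∀ {L : List (Finset G)}, x ∈ unionL L ↔ ∃ p ∈ L, x ∈ p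
  | [] => by simp [unionL]
  | p :: L => by simp [unionL, Finset.mem_union, mem_unionL (L := L)]

lemma card_unionL_le : ∀ L : List (Finset G), (unionL L).card ≤ (L.map Finset.card).sum
  | [] => by simp [unionL]
  | p :: L => by
    simp only [unionL, List.map_cons, List.sum_cons]
    exact le_trans (Finset.card_union_le _ _) (by gcongr; exact card_unionL_le L)

lemma sum_card_rt (B : Finset G) : ∀ L : List G,
    ((L.map (rt B)).map Finset.card).sum = L.length * B.card
  | [] => by simp
  | g :: L => by
    simp only [List.map_cons, List.sum_cons, List.length_cons, sum_card_rt B L, card_rt]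
    ring

lemma cast_sum_cards (P : List (Finset G)) :
    (P.map (fun p => ((p.card : ℕ) : ℝ))).sum = (((P.map Finset.card).sum : ℕ) : ℝ) := by
  rw [Nat.cast_list_sum, List.map_map]; rfl

lemma count_le (B W S : Finset G) :
    ∑ g ∈ S, ((rt B g) ∩ W).card ≤ W.card * B.card := by
  have key : ∀ g, ((rt B g) ∩ W).card = ∑ x ∈ W, if x ∈ rt B g then 1 else 0 := by
    intro g
    rw [Finset.inter_comm, ← Finset.filter_mem_eq_inter, Finset.card_filter]
  calc ∑ g ∈ S, ((rt B g) ∩ W).card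
      = ∑ g ∈ S, ∑ x ∈ W, if x ∈ rt B g then 1 else 0 := by simp_rw [key]
    _ = ∑ x ∈ W, ∑ g ∈ S, if x ∈ rt B g then 1 else 0 := Finset.sum_comm
    _ ≤ ∑ _x ∈ W, B.card := by
        refine Finset.sum_le_sum fun x _ => ?_
        rw [← Finset.card_filter]
        calc (S.filter (fun g => x ∈ rt B g)).card
            ≤ (B.image (fun a => a⁻¹ * x)).card := by
              apply Finset.card_le_card
              intro g hg
              simp only [Finset.mem_filter] at hg
              obtain ⟨a, ha, hag⟩ := mem_rt.mp hg.2
              exact Finset.mem_image.mpr ⟨a, ha, by rw [← hag]; group⟩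
          _ ≤ B.card := Finset.card_image_le
    _ = W.card * B.card := by rw [Finset.sum_const, smul_eq_mul]

lemma greedy_aux (B R : Finset G) (hB : B.Nonempty) (ε : ℝ) (hε0 : 0 < ε) (hε1 : ε < 1) :
    ∀ n : ℕ, ∀ L : List G, (∀ g ∈ L, rt B g ⊆ R) →
      (1 - ε) * (B.card * L.length) ≤ ((unionL (L.map (rt B))).card : ℝ) →
      (R \ unionL (L.map (rt B))).card ≤ n →
      ∃ L' : List G, (∀ g ∈ L', rt B g ⊆ R) ∧
        (1 - ε) * (B.card * L'.length) ≤ ((unionL (L'.map (rt B))).card : ℝ) ∧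
        ∀ g : G, rt B g ⊆ R → ε * B.card < (((rt B g) ∩ unionL (L'.map (rt B))).card : ℝ) := by
  intro n
  induction n using Nat.strong_induction_on with
  | _ n ih =>
    intro L h1 h2 h3
    by_cases hmax : ∀ g : G, rt B g ⊆ R →
        ε * B.card < (((rt B g) ∩ unionL (L.map (rt B))).card : ℝ)
    · exact ⟨L, h1, h2, hmax⟩
    push_neg at hmax
    obtain ⟨g₀, hg₀R, hg₀⟩ := hmax
    set U := unionL (L.map (rt B)) with hU
    have hUnew : unionL ((g₀ :: L).map (rt B)) = rt B g₀ ∪ U := rfl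
    have hsplit : ((rt B g₀) ∩ U).card + ((rt B g₀) \ U).card = (rt B g₀).card :=
      Finset.card_inter_add_card_sdiff _ _
    have hBc : ((rt B g₀).card : ℝ) = (B.card : ℝ) := by exact_mod_cast card_rt B g₀
    have hnew : (1 - ε) * B.card ≤ (((rt B g₀) \ U).card : ℝ) := by
      have : (((rt B g₀) \ U).card : ℝ) = (B.card : ℝ) - ((rt B g₀) ∩ U).card := by
        rw [← hBc]; exact_mod_cast (by omega : (((rt B g₀) \ U).card : ℤ)
          = ((rt B g₀).card : ℤ) - ((rt B g₀) ∩ U).card)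
      rw [this]; nlinarith [hg₀]
    have hBpos : (0:ℝ) < B.card := by exact_mod_cast Finset.card_pos.mpr hB
    have hne : ((rt B g₀) \ U).Nonempty := by
      rw [← Finset.card_pos]
      rcases Nat.eq_zero_or_pos ((rt B g₀) \ U).card with hh | hh
      · exfalso
        have hceq : ((rt B g₀ ∩ U).card : ℝ) = (B.card : ℝ) := by
          rw [← hBc]
          exact_mod_cast congrArg (Nat.cast : ℕ → ℝ)
            (by omega : (rt B g₀ ∩ U).card = (rt B g₀).card)
        nlinarith
      · exact hh
    obtain ⟨x, hx⟩ := hne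
    have hxR : x ∈ R := hg₀R (Finset.mem_sdiff.mp hx).1
    have hxU : x ∉ U := (Finset.mem_sdiff.mp hx).2
    have hdec : (R \ (rt B g₀ ∪ U)).card < (R \ U).card := by
      apply Finset.card_lt_card
      rw [Finset.ssubset_iff_of_subset]
      · refine ⟨x, Finset.mem_sdiff.mpr ⟨hxR, hxU⟩, ?_⟩
        simp only [Finset.mem_sdiff, Finset.mem_union, not_and, not_not]
        intro _
        exact Or.inl (Finset.mem_sdiff.mp hx).1
      · intro y hy
        simp only [Finset.mem_sdiff, Finset.mem_union] at hy ⊢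
        tauto
    have hcardnew : ((rt B g₀ ∪ U).card : ℝ) = ((rt B g₀ \ U).card : ℝ) + U.card := by
      exact_mod_cast congrArg (Nat.cast : ℕ → ℝ) (Finset.card_sdiff_add_card _ _).symm
    refine ih (R \ (rt B g₀ ∪ U)).card (lt_of_lt_of_le hdec h3) (g₀ :: L) ?_ ?_ le_rfl
    · intro g hg
      rcases List.mem_cons.mp hg with rfl | hg
      · exact hg₀R
      · exact h1 g hg
    · rw [hUnew, hcardnew]
      simp only [List.length_cons]
      push_cast
      nlinarith [hnew, h2]

lemma stage (B R : Finset G) (hB : B.Nonempty) (ε : ℝ) (hε0 : 0 < ε) (hε1 : ε < 1) :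
    ∃ L : List G, (∀ g ∈ L, rt B g ⊆ R) ∧
      (1 - ε) * (B.card * L.length) ≤ ((unionL (L.map (rt B))).card : ℝ) ∧
      ε * ((R.filter (fun g => ∀ a ∈ B, a * g ∈ R)).card : ℝ)
        ≤ ((unionL (L.map (rt B))).card : ℝ) := by
  obtain ⟨L, h1, h2, h3⟩ := greedy_aux B R hB ε hε0 hε1 (R \ unionL (([] : List G).map (rt B))).card []
    (by simp) (by norm_num [unionL]) le_rfl
  refine ⟨L, h1, h2, ?_⟩
  set W := unionL (L.map (rt B)) with hWdef
  set Rin := R.filter (fun g => ∀ a ∈ B, a * g ∈ R) with hRin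
  have hBpos : (0:ℝ) < B.card := by exact_mod_cast Finset.card_pos.mpr hB
  have hmem : ∀ g ∈ Rin, rt B g ⊆ R := by
    intro g hg
    rw [hRin, Finset.mem_filter] at hg
    intro x hx
    obtain ⟨a, ha, rfl⟩ := mem_rt.mp hx
    exact hg.2 a ha
  have hsum : ε * (B.card:ℝ) * Rin.card ≤ (W.card : ℝ) * B.card := by
    calc ε * (B.card:ℝ) * Rin.card = ∑ _g ∈ Rin, ε * (B.card:ℝ) := by
          rw [Finset.sum_const, nsmul_eq_mul]; ring
      _ ≤ ∑ g ∈ Rin, ((rt B g ∩ W).card : ℝ) :=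
          Finset.sum_le_sum (fun g hg => (h3 g (hmem g hg)).le)
      _ = ((∑ g ∈ Rin, (rt B g ∩ W).card : ℕ) : ℝ) := by push_cast; rfl
      _ ≤ ((W.card * B.card : ℕ) : ℝ) := by exact_mod_cast count_le B W Rin
      _ = (W.card : ℝ) * B.card := by push_cast; rfl
  nlinarith [hsum]

lemma build (h : Finset G → ℝ)
    (hinv : ∀ (A : Finset G) (g : G), A.Nonempty → h (A.image (· * g)) = h A)
    (ε μ : ℝ) (hε0 : 0 < ε) (hε2 : ε ≤ 1/2) (hμ : 0 ≤ μ)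
    (n : ℕ) (A : Fin n → Finset G)
    (hAne : ∀ t, (A t).Nonempty)
    (hAratio : ∀ t, h (A t) ≤ μ * (A t).card)
    (hAinv : ∀ s t : Fin n, s < t → ∀ a ∈ A t,
      (((a • A s) \ A s).card : ℝ) ≤ ε^2/(4*(A t).card) * (A s).card)
    (F : Finset G) (hF : F.Nonempty)
    (hFinv : ∀ t : Fin n, ∀ a ∈ A t, (((a • F) \ F).card : ℝ) ≤ ε^2/(2*(A t).card) * F.card) :
    ∀ t : ℕ, t ≤ n → ∃ P : List (Finset G),
      (∀ p ∈ P, p.Nonempty) ∧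
      (∀ p ∈ P, p ⊆ F) ∧
      (∀ p ∈ P, h p ≤ μ * p.card) ∧
      (∀ p ∈ P, ∀ t' : Fin n, t ≤ (t' : ℕ) → ∀ a ∈ A t',
        (((a⁻¹ • p) \ p).card : ℝ) ≤ ε^2/(4*(A t').card) * p.card) ∧
      (1 - ε) * (((P.map Finset.card).sum : ℕ) : ℝ) ≤ ((unionL P).card : ℝ) ∧
      ((F \ unionL P).card : ℝ) ≤ max (ε * F.card) ((1-ε/2)^t * F.card) := by
  intro t
  induction t with
  | zero =>
    intro _
    refine ⟨[], by simp, by simp, by simp, by simp, by norm_num [unionL], ?_⟩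
    rw [show unionL ([] : List (Finset G)) = ∅ from rfl, Finset.sdiff_empty, pow_zero, one_mul]
    exact le_max_right _ _
  | succ t ih =>
    intro ht
    obtain ⟨P, i1, i2, i3, i4, i5, i6⟩ := ih (Nat.le_of_succ_le ht)
    set U := unionL P with hU
    set R := F \ U with hR
    have hFpos : (0:ℝ) < F.card := by exact_mod_cast Finset.card_pos.mpr hF
    have hRF : R ⊆ F := Finset.sdiff_subset
    by_cases hRsmall : (R.card : ℝ) < ε * F.card
    · refine ⟨P, i1, i2, i3, ?_, i5, ?_⟩
      · intro p hp t' ht' a ha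
        exact i4 p hp t' (le_trans (Nat.le_succ t) ht') a ha
      · exact le_max_of_le_left hRsmall.le
    push_neg at hRsmall
    have htn : t < n := ht
    set tn : Fin n := ⟨t, htn⟩ with htndef
    set B := A tn with hB
    have hBne := hAne tn
    have hBpos : (0:ℝ) < B.card := by exact_mod_cast Finset.card_pos.mpr hBne
    have hUF : U ⊆ F := by
      intro x hx; obtain ⟨p, hp, hxp⟩ := mem_unionL.mp hx; exact i2 p hp hxp
    have hsize : (((P.map Finset.card).sum : ℕ) : ℝ) ≤ 2 * F.card := by
      have hUcard : ((U.card : ℕ) : ℝ) ≤ (F.card : ℝ) := by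
        exact_mod_cast Finset.card_le_card hUF
      nlinarith [i5]
    -- boundary bound for the remainder
    have hbd : ∀ a ∈ B, ((R \ a⁻¹ • R).card : ℝ) ≤ ε^2 / (B.card : ℝ) * F.card := by
      intro a ha
      have e1 : (R \ a⁻¹ • R).card = ((a • R) \ R).card := card_sdiff_inv_smul a R
      have sub1 : (a • R) \ R ⊆ ((a • F) \ F) ∪ unionL (P.map (fun p => p \ a • p)) := by
        intro y hy
        rw [Finset.mem_sdiff] at hy
        obtain ⟨hyaR, hyR⟩ := hy
        obtain ⟨x, hxR, rfl⟩ := Finset.mem_smul_finset.mp hyaR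
        rw [Finset.mem_union]
        by_cases hyF : a • x ∈ F
        · right
          have hxU : x ∉ U := (Finset.mem_sdiff.mp hxR).2
          have hyU : a • x ∈ U := by
            by_contra hc
            exact hyR (Finset.mem_sdiff.mpr ⟨hyF, hc⟩)
          obtain ⟨p, hp, hyp⟩ := mem_unionL.mp hyU
          refine mem_unionL.mpr ⟨p \ a • p, List.mem_map_of_mem hp,
            Finset.mem_sdiff.mpr ⟨hyp, ?_⟩⟩
          intro hc
          exact absurd (mem_unionL.mpr ⟨p, hp, Finset.smul_mem_smul_finset_iff a |>.mp hc⟩) hxU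
        · left
          exact Finset.mem_sdiff.mpr
            ⟨Finset.mem_smul_finset.mpr ⟨x, hRF hxR, rfl⟩, hyF⟩
      have c1 : (((a • R) \ R).card : ℝ)
          ≤ (((a • F) \ F).card : ℝ) + ((unionL (P.map (fun p => p \ a • p))).card : ℝ) := by
        have := Finset.card_le_card sub1
        have h2 := Finset.card_union_le ((a • F) \ F) (unionL (P.map (fun p => p \ a • p)))
        exact_mod_cast le_trans this h2
      have c2 : ((unionL (P.map (fun p => p \ a • p))).card : ℝ)
          ≤ (P.map (fun p => (((p \ a • p).card : ℕ) : ℝ))).sum := by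
        have := card_unionL_le (P.map (fun p => p \ a • p))
        rw [List.map_map] at this
        calc ((unionL (P.map (fun p => p \ a • p))).card : ℝ)
            ≤ (((P.map (Finset.card ∘ fun p => p \ a • p)).sum : ℕ) : ℝ) := by exact_mod_cast this
          _ = (P.map (fun p => (((p \ a • p).card : ℕ) : ℝ))).sum := by
              rw [Nat.cast_list_sum, List.map_map]; rfl
      have c3 : (P.map (fun p => (((p \ a • p).card : ℕ) : ℝ))).sum
          ≤ ε^2/(4*(B.card:ℝ)) * (((P.map Finset.card).sum : ℕ) : ℝ) := by
        rw [← cast_sum_cards]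
        rw [← List.sum_map_mul_left]
        apply List.sum_le_sum
        intro p hp
        have key := i4 p hp tn le_rfl a ha
        rw [card_sdiff_smul]
        exact key
      have c4 := hFinv tn a ha
      rw [e1]
      calc (((a • R) \ R).card : ℝ)
          ≤ ε^2/(2*(B.card:ℝ)) * F.card + ε^2/(4*(B.card:ℝ)) * (2 * F.card) := by
            have := le_trans c2 c3
            have h5 : ε^2/(4*(B.card:ℝ)) * (((P.map Finset.card).sum : ℕ) : ℝ)
                ≤ ε^2/(4*(B.card:ℝ)) * (2 * F.card) := by
              apply mul_le_mul_of_nonneg_left hsize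
              positivity
            linarith [c1, c4]
        _ = ε^2 / (B.card : ℝ) * F.card := by field_simp; ring
    -- the interior Rin is large
    set Rin := R.filter (fun g => ∀ a ∈ B, a * g ∈ R) with hRin
    have hRinbig : (R.card : ℝ) - ε^2 * F.card ≤ (Rin.card : ℝ) := by
      have hRRin : R \ Rin ⊆ B.biUnion (fun a => R \ a⁻¹ • R) := by
        intro g hg
        rw [Finset.mem_sdiff, hRin, Finset.mem_filter] at hg
        push_neg at hg
        obtain ⟨hgR, hbad⟩ := hg
        obtain ⟨a, ha, hagR⟩ := hbad hgR
        refine Finset.mem_biUnion.mpr ⟨a, ha, Finset.mem_sdiff.mpr ⟨hgR, fun hc => hagR ?_⟩⟩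
        rwa [Finset.mem_inv_smul_finset_iff, smul_eq_mul] at hc
      have h1 : (R \ Rin).card ≤ ∑ a ∈ B, (R \ a⁻¹ • R).card :=
        le_trans (Finset.card_le_card hRRin) (Finset.card_biUnion_le)
      have h2 : ((R \ Rin).card : ℝ) ≤ ε^2 * F.card := by
        calc ((R \ Rin).card : ℝ) ≤ ((∑ a ∈ B, (R \ a⁻¹ • R).card : ℕ) : ℝ) := by
              exact_mod_cast h1
          _ = ∑ a ∈ B, ((R \ a⁻¹ • R).card : ℝ) := by push_cast; rfl
          _ ≤ ∑ _a ∈ B, ε^2 / (B.card:ℝ) * F.card := Finset.sum_le_sum hbd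
          _ = (B.card : ℝ) * (ε^2 / (B.card:ℝ) * F.card) := by
              rw [Finset.sum_const, nsmul_eq_mul]
          _ = ε^2 * F.card := by field_simp
      have h3 : Rin ⊆ R := Finset.filter_subset _ _
      have h4 : (R \ Rin).card + Rin.card = R.card := Finset.card_sdiff_add_card_eq_card h3
      have h5 : ((R.card:ℝ)) = ((R \ Rin).card : ℝ) + (Rin.card : ℝ) := by exact_mod_cast h4.symm
      linarith
    -- run the greedy stage
    obtain ⟨L, j1, j2, j3⟩ := stage B R hBne ε hε0 (by linarith)
    set W := unionL (L.map (rt B)) with hW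
    have hWR : W ⊆ R := by
      intro x hx
      obtain ⟨p, hp, hxp⟩ := mem_unionL.mp hx
      obtain ⟨g, hg, rfl⟩ := List.mem_map.mp hp
      exact j1 g hg hxp
    refine ⟨L.map (rt B) ++ P, ?_, ?_, ?_, ?_, ?_, ?_⟩
    · intro p hp
      rcases List.mem_append.mp hp with hp | hp
      · obtain ⟨g, hg, rfl⟩ := List.mem_map.mp hp
        exact hBne.image _
      · exact i1 p hp
    · intro p hp
      rcases List.mem_append.mp hp with hp | hp
      · obtain ⟨g, hg, rfl⟩ := List.mem_map.mp hp
        exact subset_trans (j1 g hg) hRF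
      · exact i2 p hp
    · intro p hp
      rcases List.mem_append.mp hp with hp | hp
      · obtain ⟨g, hg, rfl⟩ := List.mem_map.mp hp
        have : h (rt B g) = h B := hinv B g hBne
        rw [this, card_rt]
        exact hAratio tn
      · exact i3 p hp
    · intro p hp t' ht' a ha
      rcases List.mem_append.mp hp with hp | hp
      · obtain ⟨g, hg, rfl⟩ := List.mem_map.mp hp
        have hlt : tn < t' := by
          rw [Fin.lt_iff_val_lt_val]
          have : (tn : ℕ) = t := rfl
          omega
        have key := hAinv tn t' hlt a ha
        have e1 : a⁻¹ • rt B g \ rt B g = rt (a⁻¹ • B \ B) g := by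
          rw [smul_rt_comm]
          unfold rt
          rw [← Finset.image_sdiff _ _ (mul_left_injective g)]
        rw [e1, card_rt, card_rt]
        have e2 : ((a⁻¹ • B \ B).card : ℝ) = (((a • B) \ B).card : ℝ) := by
          exact_mod_cast congrArg (Nat.cast : ℕ → ℝ) (card_inv_smul_sdiff a B)
        rw [e2]
        exact key
      · exact i4 p hp t' (by omega) a ha
    · -- accounting
      rw [unionL_append]
      have hdisj : Disjoint W U := by
        rw [Finset.disjoint_left]
        intro x hx
        exact (Finset.mem_sdiff.mp (hWR hx)).2
      have hcup : ((W ∪ U).card : ℝ) = (W.card : ℝ) + (U.card : ℝ) := by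
        exact_mod_cast congrArg (Nat.cast : ℕ → ℝ) (Finset.card_union_of_disjoint hdisj)
      have hsum2 : (((L.map (rt B) ++ P).map Finset.card).sum : ℕ)
          = L.length * B.card + (P.map Finset.card).sum := by
        rw [List.map_append, List.sum_append, sum_card_rt]
      have e3 : ((L.length * B.card + (P.map Finset.card).sum : ℕ) : ℝ)
          = (L.length : ℝ) * (B.card : ℝ) + (((P.map Finset.card).sum : ℕ) : ℝ) := by
        push_cast; ring
      rw [hcup, hsum2, e3]
      nlinarith [j2, i5]
    · -- remainder shrinks
      rw [unionL_append]
      have hrem : F \ (W ∪ U) = R \ W := by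
        ext x
        simp only [Finset.mem_sdiff, Finset.mem_union, hR]
        tauto
      rw [hrem]
      have hWRc : ((R \ W).card : ℝ) = (R.card : ℝ) - (W.card : ℝ) := by
        have h9 : (R \ W).card + W.card = R.card := Finset.card_sdiff_add_card_eq_card hWR
        have h10 := congrArg (Nat.cast : ℕ → ℝ) h9
        push_cast at h10
        linarith
      rw [hWRc]
      have step1 : (R.card : ℝ) - (W.card : ℝ) ≤ (1 - ε/2) * R.card := by
        have hj3 : ε * (Rin.card : ℝ) ≤ (W.card : ℝ) := j3
        have h11 : ε * ((R.card : ℝ) - ε^2 * F.card) ≤ ε * (Rin.card : ℝ) := by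
          nlinarith [hRinbig, hε0]
        have h12 : ε * (R.card : ℝ) - ε^3 * F.card ≤ (W.card : ℝ) := by
          have expand : ε * ((R.card:ℝ) - ε^2 * F.card) = ε * R.card - ε^3 * F.card := by ring
          linarith [le_trans h11 hj3, expand.symm.le, expand.le]
        have hRc0 : (0:ℝ) ≤ (R.card : ℝ) := Nat.cast_nonneg _
        have p1 : ε^2 * (F.card:ℝ) ≤ ε * R.card := by nlinarith [hRsmall, hε0]
        have p2 : ε * (R.card:ℝ) ≤ (1/2) * R.card := by nlinarith [hRc0]
        have p3 : ε^3 * (F.card:ℝ) ≤ (ε/2) * R.card := by nlinarith [p1, p2, hε0]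
        nlinarith [h12, p3]
      have hmono : (0:ℝ) ≤ 1 - ε/2 := by linarith
      rcases le_total (ε * (F.card:ℝ)) ((1-ε/2)^t * F.card) with hc | hc
      · rw [max_eq_right hc] at i6
        have : (1 - ε/2) * (R.card : ℝ) ≤ (1-ε/2)^(t+1) * F.card := by
          rw [pow_succ]
          calc (1 - ε/2) * (R.card : ℝ) ≤ (1 - ε/2) * ((1-ε/2)^t * F.card) :=
                mul_le_mul_of_nonneg_left i6 hmono
            _ = (1-ε/2)^t * (1-ε/2) * F.card := by ring
        exact le_max_of_le_right (le_trans step1 this)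
      · rw [max_eq_left hc] at i6
        have hRnonneg : (0:ℝ) ≤ R.card := Nat.cast_nonneg _
        have : (1 - ε/2) * (R.card : ℝ) ≤ ε * F.card := by nlinarith [i6]
        exact le_max_of_le_left (le_trans step1 this)
section H
variable (h : Finset G → ℝ)
    (hsub : ∀ A B : Finset G, A.Nonempty → B.Nonempty → h (A ∪ B) ≤ h A + h B)
    (hinv : ∀ (A : Finset G) (g : G), A.Nonempty → h (A.image (· * g)) = h A)

include hsub hinv

lemma h_nonneg {A : Finset G} (hA : A.Nonempty) : 0 ≤ h A := by
  have := hsub A A hA hA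
  rw [Finset.union_self] at this; linarith

lemma h_rt {A : Finset G} (hA : A.Nonempty) (g : G) : h (rt A g) = h A := hinv A g hA

lemma h_singleton (x : G) : h {x} = h {1} := by
  have := hinv {1} x ⟨1, Finset.mem_singleton_self 1⟩
  rwa [Finset.image_singleton, one_mul] at this

lemma subadd_list : ∀ L : List (Finset G), (∀ p ∈ L, p.Nonempty) → (unionL L).Nonempty →
    h (unionL L) ≤ (L.map h).sum
  | [], _, hne => by simp [unionL] at hne
  | p :: L, hall, hne => by
    simp only [unionL, List.map_cons, List.sum_cons]
    rcases L.eq_nil_or_concat with rfl | -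
    · simp only [show unionL ([] : List (Finset G)) = ∅ from rfl, Finset.union_empty,
        List.map_nil, List.sum_nil, add_zero, le_refl]
    by_cases hL : (unionL L).Nonempty
    · have := subadd_list L (fun q hq => hall q (List.mem_cons_of_mem _ hq)) hL
      have h2 := hsub p (unionL L) (hall p (List.mem_cons_self)) hL
      linarith
    · -- unionL L empty: every member of L is nonempty and contained in the union, so L = []
      have hLempty : unionL L = ∅ := Finset.not_nonempty_iff_eq_empty.mp hL
      have : (L.map h).sum = 0 := by
        have hnil : L = [] := by
          rcases L with - | ⟨q, L'⟩
          · rfl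
          · exact absurd (mem_unionL.mpr ⟨q, List.mem_cons_self,
              (hall q (by simp)).choose_spec⟩) (by rw [hLempty]; exact Finset.notMem_empty _)
        simp [hnil]
      rw [show p ∪ unionL L = p by rw [hLempty, Finset.union_empty], this]
      linarith [h_nonneg h hsub hinv (hall p (List.mem_cons_self))]

lemma h_le_card : ∀ A : Finset G, A.Nonempty → h A ≤ h {1} * A.card := by
  intro A hA
  induction hA using Finset.Nonempty.cons_induction with
  | singleton x => simp [h_singleton h hsub hinv x]
  | cons x s hx hs ih =>
    have : h (Finset.cons x s hx) ≤ h {x} + h s := by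
      have := hsub {x} s ⟨x, Finset.mem_singleton_self x⟩ hs
      rwa [show ({x} : Finset G) ∪ s = Finset.cons x s hx by ext y; simp [or_comm]] at this
    rw [Finset.card_cons]
    push_cast
    rw [h_singleton h hsub hinv x] at this
    nlinarith [h_nonneg h hsub hinv ⟨1, Finset.mem_singleton_self (1:G)⟩]

end H

lemma sum_const_list (c : ℝ) : ∀ l : List G, (l.map (fun _ => c)).sum = l.length * c
  | [] => by simp
  | x :: l => by
    simp only [List.map_cons, List.sum_cons, List.length_cons, sum_const_list c l]
    push_cast; ring

section H2
variable (h : Finset G → ℝ)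
    (hsub : ∀ A B : Finset G, A.Nonempty → B.Nonempty → h (A ∪ B) ≤ h A + h B)
    (hinv : ∀ (A : Finset G) (g : G), A.Nonempty → h (A.image (· * g)) = h A)

include hsub hinv

lemma cover (ε μ : ℝ) (hε0 : 0 < ε) (hε2 : ε ≤ 1/2) (hμ : 0 ≤ μ)
    (n : ℕ) (A : Fin n → Finset G)
    (hAne : ∀ t, (A t).Nonempty)
    (hAratio : ∀ t, h (A t) ≤ μ * (A t).card)
    (hAinv : ∀ s t : Fin n, s < t → ∀ a ∈ A t,
      (((a • A s) \ A s).card : ℝ) ≤ ε^2/(4*(A t).card) * (A s).card)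
    (F : Finset G) (hF : F.Nonempty)
    (hFinv : ∀ t : Fin n, ∀ a ∈ A t, (((a • F) \ F).card : ℝ) ≤ ε^2/(2*(A t).card) * F.card)
    (hpow : (1-ε/2)^n ≤ ε) :
    h F ≤ (μ/(1-ε) + h {1} * ε) * F.card := by
  obtain ⟨P, i1, i2, i3, i4, i5, i6⟩ :=
    build h hinv ε μ hε0 hε2 hμ n A hAne hAratio hAinv F hF hFinv n le_rfl
  set U := unionL P with hU
  set R := F \ U with hR
  have hFc0 : (0:ℝ) ≤ F.card := Nat.cast_nonneg _
  have hUF : U ⊆ F := by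
    intro x hx; obtain ⟨p, hp, hxp⟩ := mem_unionL.mp hx; exact i2 p hp hxp
  have hRsmall : (R.card : ℝ) ≤ ε * F.card := by
    refine le_trans i6 (max_le le_rfl ?_)
    exact mul_le_mul_of_nonneg_right hpow hFc0
  set C := P ++ (R.toList.map (fun x => ({x} : Finset G))) with hC
  have hunion : unionL C = F := by
    rw [hC, unionL_append, unionL_singletons, Finset.toList_toFinset]
    ext x
    simp only [Finset.mem_union, hR, Finset.mem_sdiff]
    constructor
    · rintro (hx | hx)
      · exact hUF hx
      · exact hx.1
    · intro hx
      by_cases hxU : x ∈ U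
      · exact Or.inl hxU
      · exact Or.inr ⟨hx, hxU⟩
  have hC1 : ∀ p ∈ C, p.Nonempty := by
    intro p hp
    rcases List.mem_append.mp hp with hp | hp
    · exact i1 p hp
    · obtain ⟨x, _, rfl⟩ := List.mem_map.mp hp
      exact ⟨x, Finset.mem_singleton_self x⟩
  have hmain := subadd_list h hsub hinv C hC1 (by rw [hunion]; exact hF)
  rw [hunion] at hmain
  have hsumC : ((C.map h).sum) = (P.map h).sum + (R.toList.map (fun x => h {x})).sum := by
    rw [hC, List.map_append, List.sum_append, sum_singletons]
  have hPsum : (P.map h).sum ≤ μ * (((P.map Finset.card).sum : ℕ) : ℝ) := by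
    rw [← cast_sum_cards, ← List.sum_map_mul_left]
    exact List.sum_le_sum (fun p hp => i3 p hp)
  have hS : (1-ε) * (((P.map Finset.card).sum:ℕ):ℝ) ≤ (F.card : ℝ) :=
    le_trans i5 (by exact_mod_cast Finset.card_le_card hUF)
  have hsing : (R.toList.map (fun x => h {x})).sum = (R.card : ℝ) * h {1} := by
    have e1 : R.toList.map (fun x => h {x}) = R.toList.map (fun _ => h {1}) :=
      List.map_congr_left (fun x _ => h_singleton h hsub hinv x)
    rw [e1, sum_const_list, Finset.length_toList]
  have hc0 : 0 ≤ h {1} := h_nonneg h hsub hinv ⟨1, Finset.mem_singleton_self 1⟩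
  have h1e : (0:ℝ) < 1 - ε := by linarith
  have hSb : (((P.map Finset.card).sum:ℕ):ℝ) ≤ (F.card : ℝ) / (1-ε) := by
    rw [le_div_iff₀ h1e]; linarith [hS]
  have hfin1 : (P.map h).sum ≤ μ * ((F.card : ℝ) / (1-ε)) :=
    le_trans hPsum (mul_le_mul_of_nonneg_left hSb hμ)
  have hfin2 : (R.card : ℝ) * h {1} ≤ ε * (F.card:ℝ) * h {1} :=
    mul_le_mul_of_nonneg_right hRsmall hc0
  have : h F ≤ μ * ((F.card : ℝ) / (1-ε)) + ε * (F.card:ℝ) * h {1} := by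
    rw [hsumC] at hmain
    rw [hsing] at hmain
    linarith
  calc h F ≤ μ * ((F.card : ℝ) / (1-ε)) + ε * (F.card:ℝ) * h {1} := this
    _ = (μ/(1-ε) + h {1} * ε) * F.card := by field_simp

end H2

lemma shapes_exist (h : Finset G → ℝ) (μ : ℝ)
    (avail : ∀ (K : Finset G) (δ : ℝ), 0 < δ → ∃ B : Finset G, B.Nonempty ∧ h B ≤ μ * B.card ∧
      ∀ a ∈ K, (((a • B) \ B).card : ℝ) ≤ δ * B.card)
    (ε : ℝ) (hε0 : 0 < ε) :
    ∀ n : ℕ, ∃ A : Fin n → Finset G, (∀ t, (A t).Nonempty) ∧ (∀ t, h (A t) ≤ μ * (A t).card) ∧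
      (∀ s t : Fin n, s < t → ∀ a ∈ A t,
        (((a • A s) \ A s).card : ℝ) ≤ ε^2/(4*(A t).card) * (A s).card)
  | 0 => ⟨fun t => t.elim0, fun t => t.elim0, fun t => t.elim0, fun s => s.elim0⟩
  | (n+1) => by
    obtain ⟨A', p1, p2, p3⟩ := shapes_exist h μ avail ε hε0 n
    set M : ℕ := Finset.univ.sup (fun t : Fin n => (A' t).card) with hM
    set K : Finset G := Finset.univ.biUnion (fun t : Fin n => A' t) with hK
    have hδ : (0:ℝ) < ε^2/(4*((M:ℝ)+1)) := by positivity
    obtain ⟨B, q1, q2, q3⟩ := avail K (ε^2/(4*((M:ℝ)+1))) hδ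
    refine ⟨Fin.cases B A', ?_, ?_, ?_⟩
    · intro t
      rcases Fin.eq_zero_or_eq_succ t with rfl | ⟨i, rfl⟩
      · simpa using q1
      · simpa using p1 i
    · intro t
      rcases Fin.eq_zero_or_eq_succ t with rfl | ⟨i, rfl⟩
      · simpa using q2
      · simpa using p2 i
    · intro s t hst a ha
      have ht0 : t ≠ 0 := by
        intro hc; rw [hc] at hst; exact absurd hst (not_lt.mpr (Fin.zero_le s))
      obtain ⟨j, rfl⟩ := Fin.exists_succ_eq.mpr ht0
      simp only [Fin.cases_succ] at ha ⊢
      rcases Fin.eq_zero_or_eq_succ s with rfl | ⟨i, rfl⟩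
      · simp only [Fin.cases_zero]
        have haK : a ∈ K := Finset.mem_biUnion.mpr ⟨j, Finset.mem_univ j, ha⟩
        refine le_trans (q3 a haK) ?_
        apply mul_le_mul_of_nonneg_right _ (Nat.cast_nonneg _)
        have hle : (A' j).card ≤ M := by
          rw [hM]
          exact Finset.le_sup (f := fun t : Fin n => (A' t).card) (Finset.mem_univ j)
        have hjM : ((A' j).card : ℝ) ≤ (M:ℝ) + 1 := by
          have := (Nat.cast_le (α := ℝ)).mpr hle
          linarith
        have hjpos : (0:ℝ) < (A' j).card := by
          exact_mod_cast Finset.card_pos.mpr (p1 j)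
        gcongr ε^2 / ?_
        linarith
      · simp only [Fin.cases_succ]
        exact p3 i j (by rwa [Fin.succ_lt_succ_iff] at hst) a ha
end OWproof

/-- A left Følner net for a group `G`. -/
structure FolnerNet (G : Type*) [Group G] where
  J : Type*
  pre : Preorder J
  dir : IsDirected J fun a b => pre.le a b
  nonempty : Nonempty J
  F : J → Finset G
  F_nonempty : ∀ j, (F j).Nonempty
  folner : ∀ g : G,
    Filter.Tendsto (fun j => (((g • (F j : Set G)) \ (F j : Set G)).ncard : ℝ) / ((F j).card : ℝ))
      (@Filter.atTop J pre) (nhds 0)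

namespace OWproof
variable {G : Type*} [Group G] [DecidableEq G]

lemma net_neBot (N : FolnerNet G) : (@Filter.atTop N.J N.pre).NeBot := by
  letI := N.pre
  exact Filter.atTop_neBot_iff.mpr ⟨N.nonempty, N.dir⟩

lemma eventually_inv (N : FolnerNet G) (K : Finset G) (δ : ℝ) (hδ : 0 < δ) :
    ∀ᶠ j in @Filter.atTop N.J N.pre,
      ∀ g ∈ K, (((g • N.F j) \ N.F j).card : ℝ) ≤ δ * (N.F j).card := by
  letI := N.pre
  rw [Finset.eventually_all]
  intro g hg
  have hf := N.folner g
  have heq : (fun j => (((g • (N.F j : Set G)) \ (N.F j : Set G)).ncard : ℝ) / ((N.F j).card : ℝ))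
      = fun j => ((((g • N.F j) \ N.F j).card : ℝ)) / ((N.F j).card : ℝ) := by
    funext j
    rw [← Finset.coe_smul_finset, ← Finset.coe_sdiff, Set.ncard_coe_finset]
  rw [heq] at hf
  have hev : ∀ᶠ j in Filter.atTop,
      ((((g • N.F j) \ N.F j).card : ℝ)) / ((N.F j).card : ℝ) < δ :=
    hf.eventually_lt_const hδ
  filter_upwards [hev] with j hj
  have hpos : (0:ℝ) < (N.F j).card := by exact_mod_cast Finset.card_pos.mpr (N.F_nonempty j)
  rw [div_lt_iff₀ hpos] at hj
  linarith

/-- the candidate limit associated with a net -/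
noncomputable def lamOf (h : Finset G → ℝ) (M : FolnerNet G) : ℝ :=
  Filter.liminf (fun j => h (M.F j) / ((M.F j).card : ℝ)) (@Filter.atTop M.J M.pre)

section H3
variable (h : Finset G → ℝ)
    (hsub : ∀ A B : Finset G, A.Nonempty → B.Nonempty → h (A ∪ B) ≤ h A + h B)
    (hinv : ∀ (A : Finset G) (g : G), A.Nonempty → h (A.image (· * g)) = h A)

include hsub hinv

lemma ratio_nonneg (N : FolnerNet G) (j : N.J) : 0 ≤ h (N.F j) / ((N.F j).card : ℝ) := by
  have := h_nonneg h hsub hinv (N.F_nonempty j)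
  positivity

lemma ratio_le (N : FolnerNet G) (j : N.J) : h (N.F j) / ((N.F j).card : ℝ) ≤ h {1} := by
  have hpos : (0:ℝ) < (N.F j).card := by exact_mod_cast Finset.card_pos.mpr (N.F_nonempty j)
  rw [div_le_iff₀ hpos]
  exact h_le_card h hsub hinv _ (N.F_nonempty j)

lemma lamOf_nonneg (M : FolnerNet G) : 0 ≤ lamOf h M := by
  letI := M.pre
  haveI := net_neBot M
  apply Filter.le_liminf_of_le
  · exact Filter.isCoboundedUnder_ge_of_le _ (x := h {1}) (ratio_le h hsub hinv M)
  · exact Filter.Eventually.of_forall (ratio_nonneg h hsub hinv M)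

lemma avail_of_net (M : FolnerNet G) (ε : ℝ) (hε0 : 0 < ε) :
    ∀ (K : Finset G) (δ : ℝ), 0 < δ →
      ∃ B : Finset G, B.Nonempty ∧ h B ≤ (lamOf h M + ε) * B.card ∧
        ∀ a ∈ K, (((a • B) \ B).card : ℝ) ≤ δ * B.card := by
  letI := M.pre
  haveI := net_neBot M
  intro K δ hδ
  have hco : Filter.IsCoboundedUnder (· ≥ ·) (Filter.atTop : Filter M.J)
      (fun j => h (M.F j) / ((M.F j).card : ℝ)) :=
    Filter.isCoboundedUnder_ge_of_le _ (x := h {1}) (ratio_le h hsub hinv M)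
  have hfreq : ∃ᶠ j in (Filter.atTop : Filter M.J),
      h (M.F j) / ((M.F j).card : ℝ) < lamOf h M + ε :=
    Filter.frequently_lt_of_liminf_lt hco (by unfold lamOf; linarith)
  obtain ⟨j, hj1, hj2⟩ := ((eventually_inv M K δ hδ).and_frequently hfreq).exists
  refine ⟨M.F j, M.F_nonempty j, ?_, hj1⟩
  have hpos : (0:ℝ) < (M.F j).card := by exact_mod_cast Finset.card_pos.mpr (M.F_nonempty j)
  rw [div_lt_iff₀ hpos] at hj2
  linarith

lemma key (μ : ℝ) (hμ : 0 ≤ μ)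
    (avail : ∀ (K : Finset G) (δ : ℝ), 0 < δ → ∃ B : Finset G, B.Nonempty ∧
      h B ≤ μ * B.card ∧ ∀ a ∈ K, (((a • B) \ B).card : ℝ) ≤ δ * B.card)
    (N : FolnerNet G) (ε : ℝ) (hε0 : 0 < ε) (hε2 : ε ≤ 1/2) :
    ∀ᶠ j in @Filter.atTop N.J N.pre,
      h (N.F j) ≤ (μ/(1-ε) + h {1} * ε) * (N.F j).card := by
  letI := N.pre
  obtain ⟨n, hn⟩ := exists_pow_lt_of_lt_one hε0 (by linarith : 1 - ε/2 < 1)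
  obtain ⟨A, a1, a2, a3⟩ := shapes_exist h μ avail ε hε0 n
  set M : ℕ := Finset.univ.sup (fun t : Fin n => (A t).card) with hM
  set K : Finset G := Finset.univ.biUnion (fun t : Fin n => A t) with hK
  have hδ : (0:ℝ) < ε^2/(2*((M:ℝ)+1)) := by positivity
  filter_upwards [eventually_inv N K _ hδ] with j hj
  apply cover h hsub hinv ε μ hε0 hε2 hμ n A a1 a2 a3 (N.F j) (N.F_nonempty j) ?_ hn.le
  intro t a ha
  have haK : a ∈ K := by rw [hK]; exact Finset.mem_biUnion.mpr ⟨t, Finset.mem_univ t, ha⟩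
  refine le_trans (hj a haK) ?_
  apply mul_le_mul_of_nonneg_right _ (Nat.cast_nonneg _)
  have hle : (A t).card ≤ M := by
    rw [hM]; exact Finset.le_sup (f := fun t : Fin n => (A t).card) (Finset.mem_univ t)
  have h1 : ((A t).card : ℝ) ≤ (M:ℝ) + 1 := by
    have := (Nat.cast_le (α := ℝ)).mpr hle
    linarith
  have h2 : (0:ℝ) < (A t).card := by exact_mod_cast Finset.card_pos.mpr (a1 t)
  gcongr ε^2 / ?_
  linarith

lemma upper (Msrc N : FolnerNet G) (ε : ℝ) (hε : 0 < ε) :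
    ∀ᶠ j in @Filter.atTop N.J N.pre,
      h (N.F j) / ((N.F j).card : ℝ) ≤ lamOf h Msrc + ε := by
  letI := N.pre
  set lam := lamOf h Msrc with hlamdef
  have hlam0 : 0 ≤ lam := lamOf_nonneg h hsub hinv Msrc
  set c := h {1} with hc
  have hc0 : 0 ≤ c := h_nonneg h hsub hinv ⟨1, Finset.mem_singleton_self 1⟩
  set D : ℝ := 2 + 2*lam + c with hD
  have hD0 : (0:ℝ) < D := by rw [hD]; linarith
  set ε' : ℝ := min (1/2) (ε/(2*D)) with hε'
  have hε'0 : 0 < ε' := lt_min (by norm_num) (by positivity)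
  have hε'2 : ε' ≤ 1/2 := min_le_left _ _
  have hε'D : ε' * D ≤ ε/2 := by
    have : ε' ≤ ε/(2*D) := min_le_right _ _
    calc ε' * D ≤ (ε/(2*D)) * D := mul_le_mul_of_nonneg_right this hD0.le
      _ = ε/2 := by field_simp
  have havail := avail_of_net h hsub hinv Msrc ε' hε'0
  have hkey := key h hsub hinv (lam + ε') (by linarith) havail N ε' hε'0 hε'2
  clear_value lam c D ε'
  filter_upwards [hkey] with j hj
  rw [← hc] at hj
  have hpos : (0:ℝ) < (N.F j).card := by exact_mod_cast Finset.card_pos.mpr (N.F_nonempty j)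
  have hr : h (N.F j) / ((N.F j).card : ℝ) ≤ (lam + ε')/(1-ε') + c * ε' := by
    rw [div_le_iff₀ hpos]
    calc h (N.F j) ≤ ((lam + ε')/(1-ε') + c * ε') * (N.F j).card := hj
      _ = ((lam + ε')/(1-ε') + c * ε') * (N.F j).card := rfl
  have h1e : (0:ℝ) < 1 - ε' := by linarith
  have t1 : (lam+ε')/(1-ε') ≤ (lam+ε')*(1+2*ε') := by
    rw [div_le_iff₀ h1e]
    nlinarith [mul_nonneg (mul_nonneg (by linarith : (0:ℝ) ≤ lam + ε') hε'0.le)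
      (by linarith : (0:ℝ) ≤ 1 - 2*ε')]
  have t2 : (lam+ε')*(1+2*ε') + c*ε' ≤ lam + ε' * D := by
    rw [hD]; nlinarith
  have final : h (N.F j) / ((N.F j).card:ℝ) ≤ lam + ε/2 := by linarith [hr, t1, t2, hε'D]
  linarith [final, hε]

lemma lamOf_le (A B : FolnerNet G) : lamOf h A ≤ lamOf h B := by
  letI := A.pre
  haveI := net_neBot A
  have hstep : ∀ ε : ℝ, 0 < ε → lamOf h A ≤ lamOf h B + ε := by
    intro ε hε
    have hev := upper h hsub hinv B A ε hε
    have hbd : Filter.IsBoundedUnder (· ≥ ·) (Filter.atTop : Filter A.J)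
        (fun j => h (A.F j) / ((A.F j).card : ℝ)) :=
      Filter.isBoundedUnder_of ⟨0, fun j => ratio_nonneg h hsub hinv A j⟩
    exact Filter.liminf_le_of_frequently_le hev.frequently hbd
  by_contra hcon
  push_neg at hcon
  have := hstep ((lamOf h A - lamOf h B)/2) (by linarith)
  linarith

end H3
end OWproof

/-- Ornstein–Weiss lemma: if `G` is an amenable group and `h` is a subadditive,
right-invariant real-valued function on the nonempty finite subsets of `G`, then there
is a real number `λ ≥ 0`, depending only on `h`, such that `h(F_j)/|F_j| → λ` along
every left Følner net `(F_j)` for `G`. -/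
theorem ornstein_weiss {G : Type*} [Group G] [DecidableEq G]
    (hamen : Nonempty (FolnerNet G))
    (h : Finset G → ℝ)
    (hsub : ∀ A B : Finset G, A.Nonempty → B.Nonempty → h (A ∪ B) ≤ h A + h B)
    (hinv : ∀ (A : Finset G) (g : G), A.Nonempty → h (A.image (· * g)) = h A) :
    ∃ lam : ℝ, 0 ≤ lam ∧ ∀ N : FolnerNet G,
      Filter.Tendsto (fun j => h (N.F j) / ((N.F j).card : ℝ))
        (@Filter.atTop N.J N.pre) (nhds lam) := by
  obtain ⟨N₀⟩ := hamen
  refine ⟨OWproof.lamOf h N₀, OWproof.lamOf_nonneg h hsub hinv N₀, ?_⟩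
  intro N
  letI := N.pre
  rw [Metric.tendsto_nhds]
  intro ε hε
  have hup : ∀ᶠ j in Filter.atTop, h (N.F j) / ((N.F j).card : ℝ) ≤ OWproof.lamOf h N₀ + ε/2 :=
    OWproof.upper h hsub hinv N₀ N (ε/2) (by linarith)
  have hle : OWproof.lamOf h N₀ ≤ OWproof.lamOf h N := OWproof.lamOf_le h hsub hinv N₀ N
  have hbd : Filter.IsBoundedUnder (· ≥ ·) (Filter.atTop : Filter N.J)
      (fun j => h (N.F j) / ((N.F j).card : ℝ)) :=
    Filter.isBoundedUnder_of ⟨0, fun j => OWproof.ratio_nonneg h hsub hinv N j⟩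
  have hlow : ∀ᶠ j in Filter.atTop,
      OWproof.lamOf h N₀ - ε < h (N.F j) / ((N.F j).card : ℝ) := by
    have hlt : OWproof.lamOf h N₀ - ε < OWproof.lamOf h N := by linarith
    exact Filter.eventually_lt_of_lt_liminf hlt hbd
  filter_upwards [hup, hlow] with j h1 h2
  rw [Real.dist_eq, abs_lt]
  constructor <;> linarith
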